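/- arXiv:2001.03593 — 3 statements merged into one kernel-verified Lean document; each statement's English description precedes it below -/
import Mathlib

section
/- Let 0 < ζ < 1 and 0 < p < 1 with ζ·p < 1, and set t := ζ·p. Then D(t‖p) ≥ p·(ζ·ln ζ − ζ + 1), where D(t‖p) := t·ln(t/p) + (1−t)·ln((1−t)/(1−p)). -/
/-- For `0 < ζ < 1`, `0 < p < 1` with `ζ p < 1` and `t := ζ p`,
`D(t‖p) ≥ p (ζ ln ζ - ζ + 1)`. -/
theorem stmt2 (ζ p : ℝ) (hζ0 : 0 < ζ) (hζ1 : ζ < 1) (hp0 : 0 < p) (hp1 : p < 1)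
    (hζp : ζ * p < 1) :
    (ζ * p) * Real.log ((ζ * p) / p) + (1 - ζ * p) * Real.log ((1 - ζ * p) / (1 - p))
      ≥ p * (ζ * Real.log ζ - ζ + 1) := by
  have ha : (0:ℝ) < 1 - ζ * p := by linarith
  have hb : (0:ℝ) < 1 - p := by linarith
  have h1 : Real.log ((ζ * p) / p) = Real.log ζ := by
    rw [mul_div_assoc, div_self hp0.ne', mul_one]
  have h2 : Real.log ((1 - p) / (1 - ζ * p)) ≤ (1 - p) / (1 - ζ * p) - 1 :=
    Real.log_le_sub_one_of_pos (div_pos hb ha)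
  have h3 : Real.log ((1 - ζ * p) / (1 - p)) = - Real.log ((1 - p) / (1 - ζ * p)) := by
    rw [Real.log_div ha.ne' hb.ne', Real.log_div hb.ne' ha.ne']; ring
  have h4 : Real.log ((1 - ζ * p) / (1 - p)) ≥ 1 - (1 - p) / (1 - ζ * p) := by
    rw [h3]; linarith
  have h5 : (1 - ζ * p) * (1 - (1 - p) / (1 - ζ * p)) = p * (1 - ζ) := by
    field_simp; ring
  have h6 : (1 - ζ * p) * Real.log ((1 - ζ * p) / (1 - p)) ≥ p * (1 - ζ) := by
    calc (1 - ζ * p) * Real.log ((1 - ζ * p) / (1 - p))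
        ≥ (1 - ζ * p) * (1 - (1 - p) / (1 - ζ * p)) := by
          exact mul_le_mul_of_nonneg_left h4 ha.le
      _ = p * (1 - ζ) := h5
  rw [h1]; nlinarith [h6]
end

section
/- If U²_{Z'|X} is stochastically degraded with respect to U¹_{Z|X}, and the adversarial channel W_{Y|X,S} is U²-overwritable, then W_{Y|X,S} is also U¹-overwritable. -/
open scoped BigOperators

/-- A channel: nonnegative entries, rows summing to 1. -/
def IsChannel {A B : Type*} [Fintype B] (P : A → B → ℝ) : Prop :=
  (∀ a b, 0 ≤ P a b) ∧ ∀ a, ∑ b, P a b = 1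

/-- `P` is stochastically degraded with respect to `Q`. -/
def Degraded {X Z₂ Z₁ : Type*} [Fintype Z₂] [Fintype Z₁]
    (P : X → Z₂ → ℝ) (Q : X → Z₁ → ℝ) : Prop :=
  ∃ R : Z₁ → Z₂ → ℝ, IsChannel R ∧ ∀ x z₂, P x z₂ = ∑ z₁, R z₁ z₂ * Q x z₁

/-- `W` (with no-adversary state `s₀`) is `U`-overwritable: there is a channel
`P_{S|X',Z}` with `∑_{s,z} U(z|x) P(s|x',z) W(y|x,s) = W(y|x',s₀)` for all `x,x',y`. -/
def UOverwritable {X Y S Z : Type*} [Fintype Y] [Fintype S] [Fintype Z]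
    (W : X → S → Y → ℝ) (s₀ : S) (U : X → Z → ℝ) : Prop :=
  ∃ P : X → Z → S → ℝ, (∀ x' z, (∀ s, 0 ≤ P x' z s) ∧ ∑ s, P x' z s = 1) ∧
    ∀ x x' y, ∑ s, ∑ z, U x z * P x' z s * W x s y = W x' s₀ y

/-- If `U²` is stochastically degraded with respect to `U¹` and `W`
is `U²`-overwritable, then `W` is `U¹`-overwritable. -/
theorem stmt5 {X Y S Z Z' : Type*}
    [Fintype X] [Fintype Y] [Fintype S] [Fintype Z] [Fintype Z']
    (W : X → S → Y → ℝ) (s₀ : S) (hW : ∀ s, IsChannel (fun x y => W x s y))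
    (U₁ : X → Z → ℝ) (U₂ : X → Z' → ℝ)
    (hU₁ : IsChannel U₁) (hU₂ : IsChannel U₂)
    (hdeg : Degraded U₂ U₁) (hover : UOverwritable W s₀ U₂) :
    UOverwritable W s₀ U₁ := by
  obtain ⟨R, ⟨hRnn, hRsum⟩, hR⟩ := hdeg
  obtain ⟨P, hP, hPmain⟩ := hover
  refine ⟨fun x' z s => ∑ z', R z z' * P x' z' s, ?_, ?_⟩
  · intro x' z
    constructor
    · intro s
      exact Finset.sum_nonneg fun z' _ =>
        mul_nonneg (hRnn z z') ((hP x' z').1 s)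
    · rw [Finset.sum_comm]
      have : ∀ z' ∈ Finset.univ, ∑ s, R z z' * P x' z' s = R z z' := by
        intro z' _
        rw [← Finset.mul_sum, (hP x' z').2, mul_one]
      rw [Finset.sum_congr rfl this, hRsum z]
  · intro x x' y
    rw [← hPmain x x' y]
    congr 1
    ext s
    simp only []
    have key : ∀ z, U₁ x z * (∑ z', R z z' * P x' z' s) * W x s y
        = ∑ z', R z z' * U₁ x z * P x' z' s * W x s y := by
      intro z
      rw [Finset.mul_sum, Finset.sum_mul]
      exact Finset.sum_congr rfl fun _ _ => by ring
    rw [Finset.sum_congr rfl (fun z _ => key z), Finset.sum_comm]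
    refine Finset.sum_congr rfl fun z' _ => ?_
    rw [hR x z', Finset.sum_mul, Finset.sum_mul]
end

section
/- Consider the myopic binary adversarial channel MBAC_{p,q} where W(y|x,s) = BSC(p)(y | x ⊕ s) for s ∈ {0,1} and W(y|x,s₀) = BSC(p)(y|x), and the channel to the adversary is U = BSC(q). If 0 < q ≤ 1/2 and 0 ≤ p < 1/2, then W is not U-overwritable. -/
open scoped BigOperators

/-- The binary symmetric channel with crossover probability `r`. -/
def BSC (r : ℝ) : Bool → Bool → ℝ := fun x y => if y = x then 1 - r else r

/-- The myopic binary adversarial channel `MBAC_{p,·}`: states are `Option Bool`,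
`none` is the no-adversary state `s₀`; a binary state `s` is added to the input. -/
def MBAC (p : ℝ) : Bool → Option Bool → Bool → ℝ := fun x s y =>
  match s with
  | none => BSC p x y
  | some b => BSC p (xor x b) y

/-- If `0 < q ≤ 1/2` and `0 ≤ p < 1/2`, the `MBAC_{p,q}` is not
`BSC(q)`-overwritable. -/
theorem stmt12 (p q : ℝ) (hq0 : 0 < q) (hq : q ≤ 1 / 2) (hp0 : 0 ≤ p) (hp : p < 1 / 2) :
    ¬ ∃ P : Bool → Bool → Option Bool → ℝ,
      (∀ x' z, (∀ s, 0 ≤ P x' z s) ∧ ∑ s, P x' z s = 1) ∧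
      ∀ x x' y, ∑ s, ∑ z, BSC q x z * P x' z s * MBAC p x s y = MBAC p x' none y := by
  rintro ⟨P, hP, heq⟩
  have hs1 := (hP false false).2
  have hs2 := (hP false true).2
  have ha2 := (hP false false).1 (some true)
  have hb2 := (hP false true).1 (some true)
  have h1 := heq false false false
  have h2 := heq true false false
  simp [Fintype.sum_option, Fintype.sum_bool, BSC, MBAC] at h1 h2 hs1 hs2
  have hq1 : q < 1 := by linarith
  have hA : ((1-q)*P false false (some true) + q*P false true (some true)) * (1-2*p) = 0 := by
    linear_combination (1-p)*(1-q)*hs1 + (1-p)*q*hs2 - h1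
  have hA0 : (1-q)*P false false (some true) + q*P false true (some true) = 0 := by
    rcases mul_eq_zero.1 hA with h | h
    · exact h
    · linarith
  have ha : P false false (some true) = 0 := by nlinarith [mul_nonneg (by linarith : (0:ℝ) ≤ 1-q) ha2, mul_nonneg hq0.le hb2]
  have hb : P false true (some true) = 0 := by nlinarith [mul_nonneg (by linarith : (0:ℝ) ≤ 1-q) ha2, mul_nonneg hq0.le hb2]
  rw [ha, hb] at h2
  nlinarith [h2, hs1, hs2]
end
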